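/- Correctness of the joint-service event representation (Lemma 6.1): for every n ∈ N, every i ∈ {1,…,I}, and every 0 ≤ k ≤ 2^{I−i}−1, the number of indices j ∈ {1,…,C_i} such that f̃(n, r_j^i) = n − ε_{A_k^i} equals n_{A_k^i}. Consequently, when each service event r_j^i has probability μ/Λ, the total probability of the transition n → n − ε_{A_k^i} under all service events is μ·n_{A_k^i}/Λ. -/

import Mathlib

open MeasureTheory Finset ENNReal

namespace ATO

/-- Events: joint arrivals `d A` for subsets `A`, and joint-return services `s i j = r_j^i`. -/
inductive Ev (I : ℕ) where
  | d : Finset (Fin I) → Ev I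
  | s : Fin I → ℕ → Ev I

instance (I : ℕ) : MeasurableSpace (Ev I) := ⊤

/-- Valid events: arrivals for nonempty `A`, services `r_j^i` with `1 ≤ j ≤ C i`. -/
def ValidEv {I : ℕ} (C : Fin I → ℕ) : Ev I → Prop
  | .d A => A.Nonempty
  | .s i j => 1 ≤ j ∧ j ≤ C i

/-- The detailed state space `N`: coordinates indexed by the nonempty subsets `A`
(the `∅` coordinate is forced to `0`), with `∑_{A ∋ i} n_A ≤ C_i` for every `i`. -/
def Nspace {I : ℕ} (C : Fin I → ℕ) : Set (Finset (Fin I) → ℕ) :=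
  {n | n ∅ = 0 ∧ ∀ i, (∑ A ∈ Finset.univ.filter (fun A => i ∈ A), n A) ≤ C i}

/-- The projection `ψ : N → X`, `ψ(n)_i = ∑_{A ∋ i} n_A`. -/
def psi {I : ℕ} (n : Finset (Fin I) → ℕ) : Fin I → ℕ :=
  fun i => ∑ A ∈ Finset.univ.filter (fun A => i ∈ A), n A

/-- The projected state space `X = {0,…,C 1} × ⋯ × {0,…,C I}`. -/
def Xspace {I : ℕ} (C : Fin I → ℕ) : Set (Fin I → ℕ) := {x | ∀ i, x i ≤ C i}

/-- The enumeration `A_k^i` of the subsets of `{i,…,I}` containing `i` (0-based indices):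
an element `t > i` belongs to `A_k^i` iff the binary digit of `k` in position `I - 1 - t`
vanishes. -/
def Aset {I : ℕ} (i : Fin I) (k : ℕ) : Finset (Fin I) :=
  Finset.univ.filter (fun t => t = i ∨ (i < t ∧ Nat.testBit k (I - 1 - t.val) = false))

/-- Partial sums `∑_{ℓ=0}^{k-1} n_{A_ℓ^i}`. -/
def psum {I : ℕ} (i : Fin I) (n : Finset (Fin I) → ℕ) (k : ℕ) : ℕ :=
  ∑ l ∈ Finset.range k, n (Aset i l)

/-- The transition function `f̃` of the detailed chain: a demand `d A` adds `ε_{A^{(n)}}`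
where `A^{(n)} = {i ∈ A : ψ(n)_i < C_i}` (no change if `A^{(n)} = ∅`); a service `r_j^i`
removes `ε_{A_k^i}` for the minimal `k` with `∑_{ℓ=0}^{k} n_{A_ℓ^i} ≥ j`, if
`∑_{ℓ} n_{A_ℓ^i} ≥ j`, and otherwise does nothing. -/
noncomputable def ftil {I : ℕ} (C : Fin I → ℕ) (n : Finset (Fin I) → ℕ) :
    Ev I → (Finset (Fin I) → ℕ)
  | .d A => fun B =>
      n B + if B = A.filter (fun i => psi n i < C i) ∧ B.Nonempty then 1 else 0
  | .s i j => fun B =>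
      n B - if j ≤ psum i n (2 ^ (I - 1 - i.val))
              ∧ B = Aset i (sInf {k | j ≤ psum i n (k + 1)}) then 1 else 0

/-- The supremum chain `f̄` on `X` (componentwise supremum over all detailed states
projecting to `x`). -/
noncomputable def fbar {I : ℕ} (C : Fin I → ℕ) (x : Fin I → ℕ) (a : Ev I) : Fin I → ℕ :=
  fun p => sSup ((fun n => psi (ftil C n a) p) '' {n | n ∈ Nspace C ∧ psi n = x})

/-- The infimum chain `f_inf` on `X` (componentwise infimum over all detailed states
projecting to `x`). -/
noncomputable def finf {I : ℕ} (C : Fin I → ℕ) (x : Fin I → ℕ) (a : Ev I) : Fin I → ℕ :=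
  fun p => sInf ((fun n => psi (ftil C n a) p) '' {n | n ∈ Nspace C ∧ psi n = x})

/-- One step of the aggregated envelope chain `F([m,M],a)`. -/
noncomputable def Fenv {I : ℕ} (C : Fin I → ℕ) (m M : Fin I → ℕ) (a : Ev I) :
    (Fin I → ℕ) × (Fin I → ℕ) :=
  (fun p => sInf ((fun x => finf C x a p) '' Set.Icc m M),
   fun p => sSup ((fun x => fbar C x a p) '' Set.Icc m M))

/-- Iteration of the aggregated envelope chain along a word (head applied first). -/
noncomputable def FenvIter {I : ℕ} (C : Fin I → ℕ) :
    (Fin I → ℕ) → (Fin I → ℕ) → List (Ev I) → (Fin I → ℕ) × (Fin I → ℕ)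
  | m, M, [] => (m, M)
  | m, M, a :: w => FenvIter C (Fenv C m M a).1 (Fenv C m M a).2 w

/-- Iterated application of a transition function along a word (head applied first). -/
def iter {I : ℕ} {σ : Type*} (f : σ → Ev I → σ) : σ → List (Ev I) → σ
  | x, [] => x
  | x, a :: w => iter f (f x a) w

/-- The backward word `u_t u_{t-1} ⋯ u_1` (with `u_t` applied first). -/
def bword {I : ℕ} (ω : ℕ → Ev I) (t : ℕ) : List (Ev I) :=
  ((List.range t).reverse).map fun s => ω (s + 1)

/-- The forward word `u_1 u_2 ⋯ u_t` (with `u_1` applied first). -/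
def fword {I : ℕ} (ω : ℕ → Ev I) (t : ℕ) : List (Ev I) :=
  (List.range t).map fun s => ω (s + 1)

/-- The "hat" operation `x̂_i = max{x_i − (x_1 + ⋯ + x_{i-1}), 0}`. -/
def xhat {I : ℕ} (x : Fin I → ℕ) (i : Fin I) : ℕ :=
  x i - ∑ t ∈ Finset.univ.filter (fun t => t < i), x t

/-- The distribution `ν` on events: `ν (d A) = λ_A / Λ` and `ν (r_j^i) = μ / Λ`. -/
noncomputable def probJ {I : ℕ} (C : Fin I → ℕ) (lam : Finset (Fin I) → ℝ) (μv Λ : ℝ) :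
    Ev I → ℝ≥0∞
  | .d A => if A.Nonempty then ENNReal.ofReal (lam A / Λ) else 0
  | .s i j => if 1 ≤ j ∧ j ≤ C i then ENNReal.ofReal (μv / Λ) else 0

lemma mem_Aset_self {I : ℕ} (i : Fin I) (k : ℕ) : i ∈ Aset i k := by
  simp [Aset]

lemma le_of_mem_Aset {I : ℕ} {i t : Fin I} {k : ℕ} (h : t ∈ Aset i k) : i ≤ t := by
  simp only [Aset, Finset.mem_filter, Finset.mem_univ, true_and] at h
  rcases h with h | h
  · exact le_of_eq h.symm
  · exact le_of_lt h.1

lemma Aset_inj {I : ℕ} {i : Fin I} {k k' : ℕ} (hk : k < 2 ^ (I - 1 - i.val))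
    (hk' : k' < 2 ^ (I - 1 - i.val)) (h : Aset i k = Aset i k') : k = k' := by
  apply Nat.eq_of_testBit_eq
  intro m
  by_cases hm : m < I - 1 - i.val
  · have hti : i.val < I - 1 - m := by omega
    have htI : I - 1 - m < I := by omega
    set t : Fin I := ⟨I - 1 - m, htI⟩ with ht
    have hit : i < t := hti
    have hne : t ≠ i := by
      intro he
      exact absurd (he ▸ hit) (lt_irrefl _)
    have hm' : I - 1 - t.val = m := by simp only [ht]; omega
    have hmem := Finset.ext_iff.mp h t
    simp only [Aset, Finset.mem_filter, Finset.mem_univ, true_and, hne, false_or,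
      hit, true_and, hm'] at hmem
    cases hbk : Nat.testBit k m <;> cases hbk' : Nat.testBit k' m
    · rfl
    · exact absurd (hmem.mp hbk) (by simp [hbk'])
    · exact absurd (hmem.mpr hbk') (by simp [hbk])
    · rfl
  · have h1 : Nat.testBit k m = false :=
      Nat.testBit_lt_two_pow (lt_of_lt_of_le hk (Nat.pow_le_pow_right (by norm_num) (by omega)))
    have h2 : Nat.testBit k' m = false :=
      Nat.testBit_lt_two_pow (lt_of_lt_of_le hk' (Nat.pow_le_pow_right (by norm_num) (by omega)))
    rw [h1, h2]

lemma psum_mono {I : ℕ} (i : Fin I) (n : Finset (Fin I) → ℕ) : Monotone (psum i n) :=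
  fun _ _ hab => Finset.sum_le_sum_of_subset (Finset.range_subset_range.mpr hab)

lemma psum_succ {I : ℕ} (i : Fin I) (n : Finset (Fin I) → ℕ) (k : ℕ) :
    psum i n (k + 1) = psum i n k + n (Aset i k) :=
  Finset.sum_range_succ _ _

lemma psum_le_C {I : ℕ} {C : Fin I → ℕ} {n : Finset (Fin I) → ℕ} (hn : n ∈ Nspace C)
    (i : Fin I) : psum i n (2 ^ (I - 1 - i.val)) ≤ C i := by
  have hinj : Set.InjOn (Aset i) (Finset.range (2 ^ (I - 1 - i.val))) := by
    intro a ha b hb hab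
    exact Aset_inj (Finset.mem_range.mp ha) (Finset.mem_range.mp hb) hab
  calc psum i n (2 ^ (I - 1 - i.val))
      = ∑ A ∈ (Finset.range (2 ^ (I - 1 - i.val))).image (Aset i), n A :=
        (Finset.sum_image (fun a ha b hb hab => hinj ha hb hab)).symm
    _ ≤ ∑ A ∈ Finset.univ.filter (fun A => i ∈ A), n A := by
        apply Finset.sum_le_sum_of_subset
        intro A hA
        simp only [Finset.mem_image] at hA
        obtain ⟨l, _, rfl⟩ := hA
        simp only [Finset.mem_filter, Finset.mem_univ, true_and]
        exact mem_Aset_self i l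
    _ ≤ C i := hn.2 i

lemma sInf_psum_eq {I : ℕ} {i : Fin I} {n : Finset (Fin I) → ℕ} {j k : ℕ}
    (h1 : psum i n k < j) (h2 : j ≤ psum i n (k + 1)) :
    sInf {k' | j ≤ psum i n (k' + 1)} = k := by
  apply le_antisymm (Nat.sInf_le (show k ∈ {k' | j ≤ psum i n (k' + 1)} from h2))
  by_contra hlt
  push_neg at hlt
  have hmem := Nat.sInf_mem (s := {k' | j ≤ psum i n (k' + 1)}) ⟨k, h2⟩
  have hle : psum i n (sInf {k' | j ≤ psum i n (k' + 1)} + 1) ≤ psum i n k :=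
    psum_mono i n (by omega)
  exact absurd (le_trans hmem hle) (not_le.mpr h1)

/-- From the function equality one extracts the service condition. -/
lemma extract_cond {I : ℕ} {C : Fin I → ℕ} {n : Finset (Fin I) → ℕ} {i i' : Fin I}
    {k j : ℕ}
    (h : (fun B => (ftil C n (.s i' j) B : ℤ))
        = fun B => (n B : ℤ) - if B = Aset i k then 1 else 0) :
    j ≤ psum i' n (2 ^ (I - 1 - i'.val))
      ∧ Aset i k = Aset i' (sInf {k' | j ≤ psum i' n (k' + 1)})
      ∧ 1 ≤ n (Aset i k) := by
  have h1 := congrFun h (Aset i k)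
  simp only [ftil] at h1
  by_cases hc : j ≤ psum i' n (2 ^ (I - 1 - i'.val))
      ∧ Aset i k = Aset i' (sInf {k' | j ≤ psum i' n (k' + 1)})
  · refine ⟨hc.1, hc.2, ?_⟩
    rw [if_pos hc, if_pos trivial] at h1
    omega
  · rw [if_neg hc, if_pos trivial] at h1
    omega

lemma cross_ne {I : ℕ} {C : Fin I → ℕ} {n : Finset (Fin I) → ℕ} {i i' : Fin I}
    (hne : i' ≠ i) {k j : ℕ} :
    ¬ ((fun B => (ftil C n (.s i' j) B : ℤ))
        = fun B => (n B : ℤ) - if B = Aset i k then 1 else 0) := by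
  intro h
  obtain ⟨_, heq, _⟩ := extract_cond h
  have h1 : i' ≤ i := le_of_mem_Aset (heq ▸ mem_Aset_self i k)
  have h2 : i ≤ i' := le_of_mem_Aset (heq.symm ▸ mem_Aset_self i' _)
  exact hne (le_antisymm h1 h2)

/-- Characterization: the event `r_j^i` realizes `n ↦ n - ε_{A_k^i}` iff
`psum k < j ≤ psum (k+1)`. -/
lemma key_iff {I : ℕ} {C : Fin I → ℕ} {n : Finset (Fin I) → ℕ} (i : Fin I) {k : ℕ}
    (hk : k < 2 ^ (I - 1 - i.val)) {j : ℕ} (hj1 : 1 ≤ j) :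
    ((fun B => (ftil C n (.s i j) B : ℤ))
        = fun B => (n B : ℤ) - if B = Aset i k then 1 else 0)
      ↔ psum i n k < j ∧ j ≤ psum i n (k + 1) := by
  constructor
  · intro h
    obtain ⟨hS, heq, _⟩ := extract_cond h
    set k'' := sInf {k' | j ≤ psum i n (k' + 1)} with hk''
    have hk''lt : k'' < 2 ^ (I - 1 - i.val) := by
      have hmem : (2 ^ (I - 1 - i.val) - 1) ∈ {k' | j ≤ psum i n (k' + 1)} := by
        have : 2 ^ (I - 1 - i.val) - 1 + 1 = 2 ^ (I - 1 - i.val) := by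
          have := Nat.one_le_two_pow (n := I - 1 - i.val); omega
        simpa [Set.mem_setOf_eq, this] using hS
      have := Nat.sInf_le hmem
      have h2 := Nat.one_le_two_pow (n := I - 1 - i.val)
      omega
    have hkk : k = k'' := Aset_inj hk hk''lt heq
    have hmem := Nat.sInf_mem (s := {k' | j ≤ psum i n (k' + 1)})
      ⟨2 ^ (I - 1 - i.val) - 1, by
        have h2 : 2 ^ (I - 1 - i.val) - 1 + 1 = 2 ^ (I - 1 - i.val) := by
          have := Nat.one_le_two_pow (n := I - 1 - i.val); omega
        simpa [Set.mem_setOf_eq, h2] using hS⟩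
    rw [← hk''] at hmem
    rw [hkk]
    refine ⟨?_, hmem⟩
    rcases Nat.eq_zero_or_pos k'' with h0 | hpos
    · rw [h0]
      simp [psum]; omega
    · have hnotmem : (k'' - 1) ∉ {k' | j ≤ psum i n (k' + 1)} :=
        Nat.notMem_of_lt_sInf (by omega)
      simp only [Set.mem_setOf_eq, not_le] at hnotmem
      have : k'' - 1 + 1 = k'' := by omega
      rwa [this] at hnotmem
  · rintro ⟨h1, h2⟩
    have hS : j ≤ psum i n (2 ^ (I - 1 - i.val)) := h2.trans (psum_mono i n hk)
    have hf : sInf {k' | j ≤ psum i n (k' + 1)} = k := sInf_psum_eq h1 h2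
    have hnk : 1 ≤ n (Aset i k) := by
      have := psum_succ i n k; omega
    funext B
    simp only [ftil, hf]
    by_cases hB : B = Aset i k
    · subst hB
      rw [if_pos ⟨hS, rfl⟩, if_pos rfl]
      omega
    · rw [if_neg (fun hcon => hB hcon.2), if_neg hB]
      omega

/-- Lemma 6.1: correctness of the joint-service event representation. For every detailed
state `n`, component `i` and index `k < 2^{I-i}`, exactly `n_{A_k^i}` of the service events
`r_j^i`, `1 ≤ j ≤ C i`, realize the transition `n → n − ε_{A_k^i}`; consequently, when each
service event has probability `μ/Λ`, the total probability of this transition under all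
service events is `μ · n_{A_k^i} / Λ`. -/
theorem stmt10 (I : ℕ) (hI : 1 ≤ I) (C : Fin I → ℕ) (hC : ∀ i, 1 ≤ C i)
    (n : Finset (Fin I) → ℕ) (hn : n ∈ Nspace C)
    (i : Fin I) (k : ℕ) (hk : k < 2 ^ (I - 1 - i.val)) :
    ((Finset.Icc 1 (C i)).filter (fun j =>
        (fun B => (ftil C n (.s i j) B : ℤ))
          = (fun B => (n B : ℤ) - if B = Aset i k then 1 else 0))).card
      = n (Aset i k)
    ∧ ∀ lam : Finset (Fin I) → ℝ, ∀ μv Λ : ℝ,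
      (∑ i' : Fin I, ∑ j ∈ Finset.Icc 1 (C i'),
        (if (fun B => (ftil C n (.s i' j) B : ℤ))
              = (fun B => (n B : ℤ) - if B = Aset i k then 1 else 0)
          then probJ C lam μv Λ (.s i' j) else 0))
        = (n (Aset i k) : ℝ≥0∞) * ENNReal.ofReal (μv / Λ) := by
  have hfilter : (Finset.Icc 1 (C i)).filter (fun j =>
        (fun B => (ftil C n (.s i j) B : ℤ))
          = (fun B => (n B : ℤ) - if B = Aset i k then 1 else 0))
      = Finset.Ioc (psum i n k) (psum i n (k + 1)) := by
    ext j
    simp only [Finset.mem_filter, Finset.mem_Icc, Finset.mem_Ioc]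
    constructor
    · rintro ⟨⟨hj1, _⟩, heq⟩
      exact (key_iff i hk hj1).mp heq
    · rintro ⟨hl, hr⟩
      have hj1 : 1 ≤ j := by omega
      refine ⟨⟨hj1, ?_⟩, (key_iff i hk hj1).mpr ⟨hl, hr⟩⟩
      exact hr.trans ((psum_mono i n hk).trans (psum_le_C hn i))
  have hcard : ((Finset.Icc 1 (C i)).filter (fun j =>
        (fun B => (ftil C n (.s i j) B : ℤ))
          = (fun B => (n B : ℤ) - if B = Aset i k then 1 else 0))).card
      = n (Aset i k) := by
    rw [hfilter, Nat.card_Ioc]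
    have := psum_succ i n k
    omega
  refine ⟨hcard, fun lam μv Λ => ?_⟩
  rw [Finset.sum_eq_single i]
  · have hstep : ∀ j ∈ Finset.Icc 1 (C i),
        (if (fun B => (ftil C n (.s i j) B : ℤ))
            = (fun B => (n B : ℤ) - if B = Aset i k then 1 else 0)
          then probJ C lam μv Λ (.s i j) else 0)
        = (if (fun B => (ftil C n (.s i j) B : ℤ))
            = (fun B => (n B : ℤ) - if B = Aset i k then 1 else 0)
          then ENNReal.ofReal (μv / Λ) else 0) := by
      intro j hj
      simp only [Finset.mem_Icc] at hj
      simp [probJ, hj.1, hj.2]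
    rw [Finset.sum_congr rfl hstep, ← Finset.sum_filter, Finset.sum_const, hcard,
      nsmul_eq_mul]
  · intro i' _ hne
    apply Finset.sum_eq_zero
    intro j _
    rw [if_neg (cross_ne hne)]
  · intro hmem
    exact absurd (Finset.mem_univ i) hmem

end ATO
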